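/- Under the hypotheses that (i) the FaFLSQR vectors satisfy v₁ = (1/(α₁β₁)) A^T r₀ and v_{k+1} = (1/α_{k+1})(A^T u_{k+1} − β_{k+1} v_k) with A z_k = β_{k+1} u_{k+1} + Σ_{j=1}^k n_{j,k} u_j and A^T u_j = α_j v_j + β_j v_{j−1}, and (ii) the FCGLS vectors satisfy s₀ = A^T r₀ and s_k = s_{k−1} − γ_{k−1} A^T q_{k−1}, then v_{k+1} ∈ span{v₁,…,v_k, A^T A M_k^{−1} v_k} and s_k ∈ span{s₀,…,s_{k−1}, A^T A M_k^{−1} s_{k−1}}. -/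

import Mathlib

open Matrix

/-- span relation (4.3): under the FaFLSQR and FCGLS recurrences,
`v_{k+1} ∈ span{v₁,…,v_k, AᵀA M_k⁻¹ v_k}` and `s_k ∈ span{s₀,…,s_{k−1}, AᵀA M_k⁻¹ s_{k−1}}`. -/
theorem stmt11 {m n : ℕ} (A : Matrix (Fin m) (Fin n) ℝ)
    (M : ℕ → Matrix (Fin n) (Fin n) ℝ) (hM : ∀ i, (M i).PosDef)
    (u : ℕ → Fin m → ℝ) (v z : ℕ → Fin n → ℝ)
    (s shat : ℕ → Fin n → ℝ) (q : ℕ → Fin m → ℝ) (r0 : Fin m → ℝ)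
    (α β γ : ℕ → ℝ) (nc θ : ℕ → ℕ → ℝ) (k : ℕ) (hk : 1 ≤ k)
    (hα : ∀ i, α i ≠ 0) (hβ : ∀ i, β i ≠ 0) (hγ : ∀ i, γ i ≠ 0)
    (hv0 : v 0 = 0)
    (hz : ∀ i, 1 ≤ i → z i = (M i)⁻¹.mulVec (v i))
    (hv1 : v 1 = (α 1 * β 1)⁻¹ • Aᵀ.mulVec r0)
    (hvk : v (k + 1) = (α (k + 1))⁻¹ • (Aᵀ.mulVec (u (k + 1)) - β (k + 1) • v k))
    (hAz : A.mulVec (z k) = β (k + 1) • u (k + 1) + ∑ j ∈ Finset.Icc 1 k, nc j k • u j)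
    (hATu : ∀ j, 1 ≤ j → j ≤ k → Aᵀ.mulVec (u j) = α j • v j + β j • v (j - 1))
    (hs0 : s 0 = Aᵀ.mulVec r0)
    (hshat : ∀ i, shat i = (M (i + 1))⁻¹.mulVec (s i))
    (hsk : s k = s (k - 1) - γ (k - 1) • Aᵀ.mulVec (q (k - 1)))
    (hqk : q (k - 1) = A.mulVec (shat (k - 1)) + ∑ j ∈ Finset.range (k - 1), θ (k - 1) j • q j)
    (hATq : ∀ j, j ≤ k - 2 → Aᵀ.mulVec (q j) = (γ j)⁻¹ • (s j - s (j + 1))) :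
    v (k + 1) ∈ Submodule.span ℝ
        ((Set.range fun i : Fin k => v (i + 1)) ∪
          {(Aᵀ * A).mulVec ((M k)⁻¹.mulVec (v k))}) ∧
    s k ∈ Submodule.span ℝ
        ((Set.range fun i : Fin k => s i) ∪
          {(Aᵀ * A).mulVec ((M k)⁻¹.mulVec (s (k - 1)))}) := by
  have hsum : ∀ (K : Finset ℕ) (c : ℕ → ℝ) (w : ℕ → Fin m → ℝ),
      Aᵀ.mulVec (∑ j ∈ K, c j • w j) = ∑ j ∈ K, c j • Aᵀ.mulVec (w j) := by
    intro K c w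
    rw [show Aᵀ.mulVec (∑ j ∈ K, c j • w j) = Aᵀ.mulVecLin (∑ j ∈ K, c j • w j) from rfl,
      map_sum]
    exact Finset.sum_congr rfl fun j _ => Aᵀ.mulVecLin.map_smul _ _
  constructor
  · set S := Submodule.span ℝ
        ((Set.range fun i : Fin k => v (i + 1)) ∪
          {(Aᵀ * A).mulVec ((M k)⁻¹.mulVec (v k))}) with hS
    have hvmem : ∀ i, i ≤ k → v i ∈ S := by
      intro i hi
      rcases Nat.eq_zero_or_pos i with h0 | h1
      · rw [h0, hv0]; exact S.zero_mem
      · apply Submodule.subset_span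
        left
        refine ⟨⟨i - 1, by omega⟩, ?_⟩
        show v ((i - 1) + 1) = v i
        exact congrArg v (by omega : i - 1 + 1 = i)
    have hw : (Aᵀ * A).mulVec ((M k)⁻¹.mulVec (v k)) ∈ S :=
      Submodule.subset_span (Or.inr rfl)
    have hATu_mem : ∀ j ∈ Finset.Icc 1 k, Aᵀ.mulVec (u j) ∈ S := by
      intro j hj
      rw [Finset.mem_Icc] at hj
      rw [hATu j hj.1 hj.2]
      exact S.add_mem (S.smul_mem _ (hvmem j hj.2)) (S.smul_mem _ (hvmem (j - 1) (by omega)))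
    have hb : β (k + 1) • Aᵀ.mulVec (u (k + 1)) =
        (Aᵀ * A).mulVec ((M k)⁻¹.mulVec (v k)) -
          ∑ j ∈ Finset.Icc 1 k, nc j k • Aᵀ.mulVec (u j) := by
      have h := congrArg (fun x => Aᵀ.mulVec x) hAz
      simp only [Matrix.mulVec_add, Matrix.mulVec_smul] at h
      rw [hz k hk, Matrix.mulVec_mulVec, hsum] at h
      rw [eq_sub_iff_add_eq, ← h]
    have key : Aᵀ.mulVec (u (k + 1)) ∈ S := by
      have h2 : Aᵀ.mulVec (u (k + 1)) = (β (k + 1))⁻¹ • (β (k + 1) • Aᵀ.mulVec (u (k + 1))) := by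
        rw [smul_smul, inv_mul_cancel₀ (hβ (k + 1)), one_smul]
      rw [h2, hb]
      exact S.smul_mem _ (S.sub_mem hw (Submodule.sum_mem _ fun j hj =>
        S.smul_mem _ (hATu_mem j hj)))
    rw [hvk]
    exact S.smul_mem _ (S.sub_mem key (S.smul_mem _ (hvmem k le_rfl)))
  · set S := Submodule.span ℝ
        ((Set.range fun i : Fin k => s i) ∪
          {(Aᵀ * A).mulVec ((M k)⁻¹.mulVec (s (k - 1)))}) with hS
    have hsmem : ∀ i, i ≤ k - 1 → s i ∈ S := fun i hi =>
      Submodule.subset_span (Or.inl ⟨⟨i, by omega⟩, rfl⟩)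
    have hw : (Aᵀ * A).mulVec ((M k)⁻¹.mulVec (s (k - 1))) ∈ S :=
      Submodule.subset_span (Or.inr rfl)
    have hATq_mem : ∀ j ∈ Finset.range (k - 1), Aᵀ.mulVec (q j) ∈ S := by
      intro j hj
      rw [Finset.mem_range] at hj
      rw [hATq j (by omega)]
      exact S.smul_mem _ (S.sub_mem (hsmem j (by omega)) (hsmem (j + 1) (by omega)))
    have hqmem : Aᵀ.mulVec (q (k - 1)) ∈ S := by
      have h := congrArg (fun x => Aᵀ.mulVec x) hqk
      simp only [Matrix.mulVec_add] at h
      rw [hshat (k - 1), Matrix.mulVec_mulVec, show k - 1 + 1 = k from by omega, hsum] at h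
      rw [h]
      exact S.add_mem hw (Submodule.sum_mem _ fun j hj => S.smul_mem _ (hATq_mem j hj))
    rw [hsk]
    exact S.sub_mem (hsmem (k - 1) (by omega)) (S.smul_mem _ hqmem)
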